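/- arXiv:2503.14205 — 3 statements merged into one kernel-verified Lean document; each statement's English description precedes it below -/
import Mathlib

section
/- Let L : ℝ^d → ℝ be a differentiable β-smooth function. Consider one SAM step: given the current iterate w_t ∈ ℝ^d and a mini-batch stochastic gradient oracle ∇L_{t+1} for a batch of size b (a random map ℝ^d → ℝ^d which is conditionally unbiased with per-point variance bounded by σ²/b, i.e. 𝔼[∇L_{t+1}(x) | x] = ∇L(x) and 𝔼[‖∇L_{t+1}(x) − ∇L(x)‖² | x] ≤ σ²/b, in particular at the ascent point w_{t+1/2}), set the perturbed point w_{t+1/2} = w_t + r∇L_{t+1}(w_t') where ∇L_{t+1}(w_t') is the stochastic gradient with the coordinates outside a selected set of layers zeroed (with layer-wise mass ratio κ ∈ [0,1], and κ = 1 allowed for full perturbation), and update w_{t+1} = w_t − η∇L_{t+1}(w_{t+1/2}). If 0 < η ≤ 1/(2β) and 0 < r ≤ 1/(2β), then 𝔼[L(w_{t+1})] ≤ 𝔼[L(w_t)] − (η/4)𝔼[‖∇L(w_t)‖²] + ηβ(η + βr²)σ²/b. -/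
open MeasureTheory
open scoped RealInnerProductSpace

theorem descent_lemma {d : ℕ} (β : ℝ) (hβ : 0 ≤ β)
    (L : EuclideanSpace ℝ (Fin d) → ℝ) (hL : Differentiable ℝ L)
    (hsmooth : ∀ u v : EuclideanSpace ℝ (Fin d),
      ‖gradient L u - gradient L v‖ ≤ β * ‖u - v‖)
    (x y : EuclideanSpace ℝ (Fin d)) :
    L y ≤ L x + ⟪gradient L x, y - x⟫ + β / 2 * ‖y - x‖ ^ 2 := by
  set v := y - x with hv
  have hlip : LipschitzWith β.toNNReal (gradient L) :=
    LipschitzWith.of_dist_le_mul fun u w => by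
      simpa [dist_eq_norm, Real.coe_toNNReal β hβ] using hsmooth u w
  set φ' : ℝ → ℝ := fun t => ⟪gradient L (x + t • v), v⟫ with hφ'
  have hderiv : ∀ t : ℝ, HasDerivAt (fun t : ℝ => L (x + t • v)) (φ' t) t := by
    intro t
    have hpath : HasDerivAt (fun t : ℝ => x + t • v) v t :=
      by simpa using (((hasDerivAt_id t).smul_const v).const_add x)
    have hF := (hL (x + t • v)).hasGradientAt.hasFDerivAt
    have := hF.comp_hasDerivAt t hpath
    simpa [hφ', InnerProductSpace.toDual_apply_apply, Function.comp_def] using this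
  have hcont : Continuous φ' := by
    apply Continuous.inner
    · exact hlip.continuous.comp (by continuity)
    · exact continuous_const
  have hFTC : ∫ t in (0:ℝ)..1, φ' t = L (x + (1:ℝ) • v) - L (x + (0:ℝ) • v) :=
    intervalIntegral.integral_eq_sub_of_hasDerivAt
      (fun t _ => hderiv t) (hcont.intervalIntegrable 0 1)
  have hbound : ∀ t ∈ Set.Icc (0:ℝ) 1,
      φ' t ≤ ⟪gradient L x, v⟫ + β * ‖v‖ ^ 2 * t := by
    intro t ht
    have h1 : φ' t - ⟪gradient L x, v⟫ = ⟪gradient L (x + t • v) - gradient L x, v⟫ := by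
      simp [hφ', inner_sub_left]
    have h2 : ⟪gradient L (x + t • v) - gradient L x, v⟫ ≤
        ‖gradient L (x + t • v) - gradient L x‖ * ‖v‖ := real_inner_le_norm _ _
    have h3 : ‖gradient L (x + t • v) - gradient L x‖ ≤ β * (t * ‖v‖) := by
      have := hsmooth (x + t • v) x
      simpa [norm_smul, abs_of_nonneg ht.1] using this
    nlinarith [norm_nonneg v, ht.1]
  have hmono : ∫ t in (0:ℝ)..1, φ' t ≤
      ∫ t in (0:ℝ)..1, (⟪gradient L x, v⟫ + β * ‖v‖ ^ 2 * t) := by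
    apply intervalIntegral.integral_mono_on (by norm_num)
      (hcont.intervalIntegrable 0 1)
      ((continuous_const.add (continuous_const.mul continuous_id)).intervalIntegrable 0 1)
    intro t ht; exact hbound t ht
  have hrhs : ∫ t in (0:ℝ)..1, (⟪gradient L x, v⟫ + β * ‖v‖ ^ 2 * t) =
      ⟪gradient L x, v⟫ + β / 2 * ‖v‖ ^ 2 := by
    rw [intervalIntegral.integral_add intervalIntegrable_const
      (IntervalIntegrable.const_mul intervalIntegral.intervalIntegrable_id _), intervalIntegral.integral_const_mul,
      integral_id, intervalIntegral.integral_const]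
    simp
    ring
  have hxy : x + (1:ℝ) • v = y := by simp [hv]
  have hx0 : x + (0:ℝ) • v = x := by simp
  rw [hxy, hx0] at hFTC
  linarith [hmono.trans_eq hrhs, hFTC.symm.le, hFTC.le]


set_option maxHeartbeats 1000000 in
lemma sam_arith (β r η κ sb T Lw A I1 I2 I3 I4 GM : ℝ)
    (hβ : 0 ≤ β) (hη : 0 < η) (hr : 0 ≤ r) (hκ0 : 0 ≤ κ) (hκ1 : κ ≤ 1)
    (hβη : β * η ≤ 1 / 2) (hβr : β * r ≤ 1 / 2) (hsb : 0 ≤ sb) (hA : 0 ≤ A)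
    (hI2 : 0 ≤ I2)
    (hT : T ≤ Lw - η * I1 + β / 2 * η ^ 2 * GM)
    (hGM : GM ≤ 2 * sb + 2 * I2)
    (hI3 : I3 = I2 - 2 * I1 + A)
    (hgap : I3 ≤ β ^ 2 * r ^ 2 * I4)
    (hI4 : I4 ≤ sb + κ * A) :
    T ≤ Lw - (η / 4) * A + (β * η ^ 2 + η * β ^ 2 * r ^ 2) * sb := by
  have hc : (0:ℝ) ≤ β / 2 * η ^ 2 := by positivity
  have h1 : T ≤ Lw - η * I1 + β / 2 * η ^ 2 * (2 * sb + 2 * I2) := by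
    nlinarith [mul_le_mul_of_nonneg_left hGM hc]
  have h2 : β * η ^ 2 * I2 ≤ η / 2 * I2 := by
    apply mul_le_mul_of_nonneg_right _ hI2
    nlinarith [mul_le_mul_of_nonneg_right hβη hη.le]
  have h3 : T ≤ Lw + β * η ^ 2 * sb + (η / 2) * (I3 - A) := by
    have he : -(η * I1) + η / 2 * I2 = η / 2 * (I3 - A) := by rw [hI3]; ring
    nlinarith [h1, h2, he]
  have hbr2 : β ^ 2 * r ^ 2 ≤ 1 / 4 := by nlinarith [mul_nonneg hβ hr, hβr]
  have h4 : I3 ≤ β ^ 2 * r ^ 2 * (sb + κ * A) :=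
    hgap.trans (mul_le_mul_of_nonneg_left hI4 (by positivity))
  have h5 : β ^ 2 * r ^ 2 * (sb + κ * A) ≤ β ^ 2 * r ^ 2 * sb + 1 / 4 * A := by
    have hk : β ^ 2 * r ^ 2 * κ ≤ 1 / 4 := by
      nlinarith [mul_le_mul hbr2 hκ1 hκ0 (by norm_num : (0:ℝ) ≤ 1/4)]
    nlinarith [mul_le_mul_of_nonneg_right hk hA]
  have h7 : (η / 2) * I3 ≤ (η / 2) * (β ^ 2 * r ^ 2 * sb + 1 / 4 * A) :=
    mul_le_mul_of_nonneg_left (h4.trans h5) (by positivity)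
  have h8 : (η / 2) * (β ^ 2 * r ^ 2 * sb) ≤ η * β ^ 2 * r ^ 2 * sb := by
    nlinarith [mul_nonneg (mul_nonneg hη.le (mul_nonneg (sq_nonneg β) (sq_nonneg r))) hsb]
  linarith [mul_nonneg hη.le hA, h3, h7, h8]

set_option maxHeartbeats 1000000
/-- Lemma 4: one step of (layer-wise) SAM. Given the current iterate `wt`, the stochastic
layer-wise ascent gradient `Gasc` (coordinates outside the selected layers `S` zeroed,
unbiased for `g' = P∇L(wt)` with variance `≤ σ²/b`, and `‖g'‖² = κ‖∇L(wt)‖²`, `κ ∈ [0,1]`),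
the perturbed point `Wmid = wt + r Gasc`, and the stochastic descent gradient `Gmid`
(conditionally on `Wmid` unbiased for `∇L(Wmid)` with conditional variance `≤ σ²/b`),
the update `wnext = wt − η Gmid` with `0 < η ≤ 1/(2β)` and `0 < r ≤ 1/(2β)` satisfies
`𝔼[L(wnext)] ≤ L(wt) − (η/4)‖∇L(wt)‖² + ηβ(η + βr²)σ²/b`. -/
theorem sam_one_step_descent
    {d : ℕ} {Ω : Type*} [MeasurableSpace Ω] (μ : Measure Ω) [IsProbabilityMeasure μ]
    (β r η κ σ : ℝ) (b : ℕ) (hb : 0 < b) (hβ : 0 ≤ β)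
    (L : EuclideanSpace ℝ (Fin d) → ℝ) (hL : Differentiable ℝ L)
    (hsmooth : ∀ u v : EuclideanSpace ℝ (Fin d),
      ‖gradient L u - gradient L v‖ ≤ β * ‖u - v‖)
    (hη : 0 < η) (hη2 : η ≤ 1 / (2 * β)) (hr : 0 < r) (hr2 : r ≤ 1 / (2 * β))
    (wt g' : EuclideanSpace ℝ (Fin d)) (S : Finset (Fin d))
    (hg' : ∀ i : Fin d, g' i = if i ∈ S then gradient L wt i else 0)
    (hκ0 : 0 ≤ κ) (hκ1 : κ ≤ 1)
    (hκ : ‖g'‖ ^ 2 = κ * ‖gradient L wt‖ ^ 2)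
    (Gasc Gmid Wmid wnext : Ω → EuclideanSpace ℝ (Fin d))
    (hGasc_meas : Measurable Gasc) (hGmid_meas : Measurable Gmid)
    (hWmid : ∀ ω, Wmid ω = wt + r • Gasc ω)
    (hwnext : ∀ ω, wnext ω = wt - η • Gmid ω)
    -- the ascent gradient has the coordinates outside the selected layers zeroed
    (hGasc_supp : ∀ ω, ∀ i ∉ S, Gasc ω i = 0)
    -- the ascent gradient is an unbiased estimate of `g'` with variance `≤ σ²/b`
    (hasc_int : Integrable Gasc μ)
    (hasc_mean : ∫ ω, Gasc ω ∂μ = g')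
    (hasc_var_int : Integrable (fun ω => ‖Gasc ω - g'‖ ^ 2) μ)
    (hasc_var : ∫ ω, ‖Gasc ω - g'‖ ^ 2 ∂μ ≤ σ ^ 2 / b)
    -- the descent gradient is, conditionally on the evaluation point `Wmid`,
    -- an unbiased estimate of `∇L(Wmid)` with conditional variance `≤ σ²/b`
    (hmid_int : Integrable Gmid μ)
    (hmid_mean : μ[Gmid | MeasurableSpace.comap Wmid inferInstance] =ᵐ[μ]
      fun ω => gradient L (Wmid ω))
    (hmid_var_int : Integrable (fun ω => ‖Gmid ω - gradient L (Wmid ω)‖ ^ 2) μ)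
    (hmid_var : ∀ᵐ ω ∂μ,
      (μ[(fun ω => ‖Gmid ω - gradient L (Wmid ω)‖ ^ 2) |
          MeasurableSpace.comap Wmid inferInstance]) ω ≤ σ ^ 2 / b)
    -- integrability of the quantities appearing in the argument
    (hL_int : Integrable (fun ω => L (wnext ω)) μ)
    (hgradmid_int : Integrable (fun ω => gradient L (Wmid ω)) μ)
    (hgradmid_sq_int : Integrable (fun ω => ‖gradient L (Wmid ω)‖ ^ 2) μ)
    (hGmid_sq_int : Integrable (fun ω => ‖Gmid ω‖ ^ 2) μ)
    (hinner_int : Integrable (fun ω => ⟪gradient L (Wmid ω), gradient L wt⟫) μ) :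
    ∫ ω, L (wnext ω) ∂μ ≤
      L wt - (η / 4) * ‖gradient L wt‖ ^ 2 + η * β * (η + β * r ^ 2) * σ ^ 2 / b := by
  set a := gradient L wt with ha
  set m : Ω → EuclideanSpace ℝ (Fin d) := fun ω => gradient L (Wmid ω) with hm
  set N : ℝ := σ ^ 2 / b with hNdef
  have hβpos : 0 < β := by
    rcases hβ.lt_or_eq with h | h
    · exact h
    · exfalso; rw [← h] at hη2; simp at hη2; linarith
  have hβη : β * η ≤ 1 / 2 := by
    have := (le_div_iff₀ (by positivity : (0:ℝ) < 2 * β)).mp hη2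
    linarith
  have hβr : β * r ≤ 1 / 2 := by
    have := (le_div_iff₀ (by positivity : (0:ℝ) < 2 * β)).mp hr2
    linarith
  have hN : (0:ℝ) ≤ N := by positivity
  have hA : (0:ℝ) ≤ ‖a‖ ^ 2 := by positivity
  -- pointwise descent lemma
  have hstep : ∀ ω, L (wnext ω) ≤
      L wt - η * ⟪a, Gmid ω⟫ + β / 2 * η ^ 2 * ‖Gmid ω‖ ^ 2 := by
    intro ω
    have hd := descent_lemma β hβ L hL hsmooth wt (wnext ω)
    have h1 : wnext ω - wt = -(η • Gmid ω) := by rw [hwnext ω]; abel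
    rw [h1] at hd
    have h2 : ⟪a, -(η • Gmid ω)⟫ = -(η * ⟪a, Gmid ω⟫) := by
      rw [inner_neg_right, real_inner_smul_right]
    have h3 : ‖-(η • Gmid ω)‖ ^ 2 = η ^ 2 * ‖Gmid ω‖ ^ 2 := by
      rw [norm_neg, norm_smul]
      simp [abs_of_pos hη]; ring
    rw [h2, h3] at hd
    linarith
  -- integrate the descent lemma
  have hint_inner : Integrable (fun ω => ⟪a, Gmid ω⟫) μ := hmid_int.const_inner a
  have hrhs_int : Integrable
      (fun ω => L wt - η * ⟪a, Gmid ω⟫ + β / 2 * η ^ 2 * ‖Gmid ω‖ ^ 2) μ :=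
    ((integrable_const _).sub (hint_inner.const_mul η)).add (hGmid_sq_int.const_mul _)
  have hIL : ∫ ω, L (wnext ω) ∂μ ≤
      L wt - η * (∫ ω, ⟪a, Gmid ω⟫ ∂μ) + β / 2 * η ^ 2 * ∫ ω, ‖Gmid ω‖ ^ 2 ∂μ := by
    calc ∫ ω, L (wnext ω) ∂μ ≤
        ∫ ω, (L wt - η * ⟪a, Gmid ω⟫ + β / 2 * η ^ 2 * ‖Gmid ω‖ ^ 2) ∂μ :=
          integral_mono hL_int hrhs_int hstep
      _ = L wt - η * (∫ ω, ⟪a, Gmid ω⟫ ∂μ) + β / 2 * η ^ 2 * ∫ ω, ‖Gmid ω‖ ^ 2 ∂μ := by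
          have eadd : ∫ ω, (L wt - η * ⟪a, Gmid ω⟫ + β / 2 * η ^ 2 * ‖Gmid ω‖ ^ 2) ∂μ
              = (∫ ω, (L wt - η * ⟪a, Gmid ω⟫) ∂μ)
                + ∫ ω, β / 2 * η ^ 2 * ‖Gmid ω‖ ^ 2 ∂μ :=
            integral_add ((integrable_const _).sub (hint_inner.const_mul η))
              (hGmid_sq_int.const_mul _)
          have esub : ∫ ω, (L wt - η * ⟪a, Gmid ω⟫) ∂μ
              = (∫ _ω, (L wt : ℝ) ∂μ) - ∫ ω, η * ⟪a, Gmid ω⟫ ∂μ :=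
            integral_sub (integrable_const _) (hint_inner.const_mul η)
          rw [eadd, esub, integral_const_mul, integral_const_mul, integral_const]
          simp
  -- conditional expectation facts
  have hWmid_meas : Measurable Wmid := by
    have : Wmid = fun ω => wt + r • Gasc ω := funext hWmid
    rw [this]; exact measurable_const.add (hGasc_meas.const_smul r)
  have hle : MeasurableSpace.comap Wmid inferInstance ≤ ‹MeasurableSpace Ω› :=
    hWmid_meas.comap_le
  haveI : SigmaFinite (μ.trim hle) := by
    haveI := isFiniteMeasure_trim hle (μ := μ)
    infer_instance
  have hGmid_eq : ∫ ω, Gmid ω ∂μ = ∫ ω, m ω ∂μ := by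
    rw [← integral_condExp hle (f := Gmid)]
    exact integral_congr_ae hmid_mean
  have hcross : ∫ ω, ⟪a, Gmid ω⟫ ∂μ = ∫ ω, ⟪a, m ω⟫ ∂μ := by
    rw [integral_inner hmid_int, integral_inner hgradmid_int, hGmid_eq]
  -- conditional variance bound
  have hvarmid : ∫ ω, ‖Gmid ω - m ω‖ ^ 2 ∂μ ≤ N := by
    have h1 := integral_condExp hle (μ := μ)
      (f := fun ω => ‖Gmid ω - gradient L (Wmid ω)‖ ^ 2)
    have h2 : ∫ ω, (μ[(fun ω => ‖Gmid ω - gradient L (Wmid ω)‖ ^ 2) |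
        MeasurableSpace.comap Wmid inferInstance]) ω ∂μ ≤ ∫ _ω, N ∂μ :=
      integral_mono_ae integrable_condExp (integrable_const _) hmid_var
    rw [h1, integral_const] at h2
    simpa using h2
  -- second moment of Gmid
  have hGmid_sq : ∫ ω, ‖Gmid ω‖ ^ 2 ∂μ ≤ 2 * N + 2 * ∫ ω, ‖m ω‖ ^ 2 ∂μ := by
    have hpt : ∀ ω, ‖Gmid ω‖ ^ 2 ≤ 2 * ‖Gmid ω - m ω‖ ^ 2 + 2 * ‖m ω‖ ^ 2 := by
      intro ω
      have h1 : ‖Gmid ω‖ ≤ ‖Gmid ω - m ω‖ + ‖m ω‖ := by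
        simpa using norm_add_le (Gmid ω - m ω) (m ω)
      have h2 : ‖Gmid ω‖ ^ 2 ≤ (‖Gmid ω - m ω‖ + ‖m ω‖) ^ 2 :=
        pow_le_pow_left₀ (norm_nonneg _) h1 2
      nlinarith [sq_nonneg (‖Gmid ω - m ω‖ - ‖m ω‖)]
    calc ∫ ω, ‖Gmid ω‖ ^ 2 ∂μ ≤
        ∫ ω, (2 * ‖Gmid ω - m ω‖ ^ 2 + 2 * ‖m ω‖ ^ 2) ∂μ :=
          integral_mono hGmid_sq_int
            ((hmid_var_int.const_mul 2).add (hgradmid_sq_int.const_mul 2)) hpt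
      _ = 2 * (∫ ω, ‖Gmid ω - m ω‖ ^ 2 ∂μ) + 2 * ∫ ω, ‖m ω‖ ^ 2 ∂μ := by
          have eadd : ∫ ω, (2 * ‖Gmid ω - m ω‖ ^ 2 + 2 * ‖m ω‖ ^ 2) ∂μ
              = (∫ ω, 2 * ‖Gmid ω - m ω‖ ^ 2 ∂μ) + ∫ ω, 2 * ‖m ω‖ ^ 2 ∂μ :=
            integral_add (hmid_var_int.const_mul 2) (hgradmid_sq_int.const_mul 2)
          rw [eadd, integral_const_mul, integral_const_mul]
      _ ≤ 2 * N + 2 * ∫ ω, ‖m ω‖ ^ 2 ∂μ := by linarith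
  -- second moment of Gasc
  have hGasc_sub_int : Integrable (fun ω => Gasc ω - g') μ :=
    hasc_int.sub (integrable_const _)
  have hGasc_inner_int : Integrable (fun ω => ⟪g', Gasc ω - g'⟫) μ :=
    hGasc_sub_int.const_inner g'
  have hGasc_sq_eq : ∀ ω, ‖Gasc ω‖ ^ 2 =
      ‖Gasc ω - g'‖ ^ 2 + 2 * ⟪g', Gasc ω - g'⟫ + ‖g'‖ ^ 2 := by
    intro ω
    have := norm_add_sq_real (Gasc ω - g') g'
    simp only [sub_add_cancel] at this
    rw [this, real_inner_comm]
  have hGasc_sq_int : Integrable (fun ω => ‖Gasc ω‖ ^ 2) μ := by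
    have : (fun ω => ‖Gasc ω‖ ^ 2) =
        fun ω => ‖Gasc ω - g'‖ ^ 2 + 2 * ⟪g', Gasc ω - g'⟫ + ‖g'‖ ^ 2 :=
      funext hGasc_sq_eq
    rw [this]
    exact (hasc_var_int.add (hGasc_inner_int.const_mul 2)).add (integrable_const _)
  have hGasc_sq : ∫ ω, ‖Gasc ω‖ ^ 2 ∂μ ≤ N + κ * ‖a‖ ^ 2 := by
    have hinner0 : ∫ ω, ⟪g', Gasc ω - g'⟫ ∂μ = 0 := by
      rw [integral_inner hGasc_sub_int]
      rw [integral_sub hasc_int (integrable_const _), hasc_mean, integral_const]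
      simp
    have e0 : ∫ ω, ‖Gasc ω‖ ^ 2 ∂μ
        = ∫ ω, (‖Gasc ω - g'‖ ^ 2 + 2 * ⟪g', Gasc ω - g'⟫ + ‖g'‖ ^ 2) ∂μ :=
      integral_congr_ae (Filter.Eventually.of_forall fun ω => hGasc_sq_eq ω)
    have e1 : ∫ ω, (‖Gasc ω - g'‖ ^ 2 + 2 * ⟪g', Gasc ω - g'⟫ + ‖g'‖ ^ 2) ∂μ
        = (∫ ω, (‖Gasc ω - g'‖ ^ 2 + 2 * ⟪g', Gasc ω - g'⟫) ∂μ) + ∫ _ω, ‖g'‖ ^ 2 ∂μ :=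
      integral_add (hasc_var_int.add (hGasc_inner_int.const_mul 2)) (integrable_const _)
    have e2 : ∫ ω, (‖Gasc ω - g'‖ ^ 2 + 2 * ⟪g', Gasc ω - g'⟫) ∂μ
        = (∫ ω, ‖Gasc ω - g'‖ ^ 2 ∂μ) + ∫ ω, 2 * ⟪g', Gasc ω - g'⟫ ∂μ :=
      integral_add hasc_var_int (hGasc_inner_int.const_mul 2)
    have : ∫ ω, ‖Gasc ω‖ ^ 2 ∂μ =
        (∫ ω, ‖Gasc ω - g'‖ ^ 2 ∂μ) + 2 * (∫ ω, ⟪g', Gasc ω - g'⟫ ∂μ) + ‖g'‖ ^ 2 := by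
      rw [e0, e1, e2, integral_const_mul, integral_const]
      simp
    rw [this, hinner0, hκ]
    simp only [mul_zero, add_zero]
    linarith
  -- Lipschitz bound on the gradient gap, integrated
  have hgap_eq : ∀ ω, ‖m ω - a‖ ^ 2 = ‖m ω‖ ^ 2 - 2 * ⟪a, m ω⟫ + ‖a‖ ^ 2 := by
    intro ω
    rw [norm_sub_sq_real, real_inner_comm]
  have hinner_int' : Integrable (fun ω => ⟪a, m ω⟫) μ := by
    have he : (fun ω => ⟪a, m ω⟫) =
        fun ω => ⟪gradient L (Wmid ω), gradient L wt⟫ := by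
      funext ω; rw [real_inner_comm]
    rw [he]; exact hinner_int
  have hgap_fun_eq : (fun ω => ‖m ω - a‖ ^ 2) =
      fun ω => ‖m ω‖ ^ 2 - 2 * ⟪a, m ω⟫ + ‖a‖ ^ 2 := funext hgap_eq
  have hgap_int : Integrable (fun ω => ‖m ω - a‖ ^ 2) μ := by
    rw [hgap_fun_eq]
    exact (hgradmid_sq_int.sub (hinner_int'.const_mul 2)).add (integrable_const _)
  have hI3 : ∫ ω, ‖m ω - a‖ ^ 2 ∂μ =
      (∫ ω, ‖m ω‖ ^ 2 ∂μ) - 2 * (∫ ω, ⟪a, m ω⟫ ∂μ) + ‖a‖ ^ 2 := by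
    have e0 : ∫ ω, ‖m ω - a‖ ^ 2 ∂μ
        = ∫ ω, (‖m ω‖ ^ 2 - 2 * ⟪a, m ω⟫ + ‖a‖ ^ 2) ∂μ :=
      integral_congr_ae (Filter.Eventually.of_forall fun ω => hgap_eq ω)
    have e1 : ∫ ω, (‖m ω‖ ^ 2 - 2 * ⟪a, m ω⟫ + ‖a‖ ^ 2) ∂μ
        = (∫ ω, (‖m ω‖ ^ 2 - 2 * ⟪a, m ω⟫) ∂μ) + ∫ _ω, ‖a‖ ^ 2 ∂μ :=
      integral_add (hgradmid_sq_int.sub (hinner_int'.const_mul 2)) (integrable_const _)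
    have e2 : ∫ ω, (‖m ω‖ ^ 2 - 2 * ⟪a, m ω⟫) ∂μ
        = (∫ ω, ‖m ω‖ ^ 2 ∂μ) - ∫ ω, 2 * ⟪a, m ω⟫ ∂μ :=
      integral_sub hgradmid_sq_int (hinner_int'.const_mul 2)
    rw [e0, e1, e2, integral_const_mul, integral_const]
    simp
  have hgap_le : ∫ ω, ‖m ω - a‖ ^ 2 ∂μ ≤ β ^ 2 * r ^ 2 * ∫ ω, ‖Gasc ω‖ ^ 2 ∂μ := by
    have hpt : ∀ ω, ‖m ω - a‖ ^ 2 ≤ β ^ 2 * r ^ 2 * ‖Gasc ω‖ ^ 2 := by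
      intro ω
      have h1 := hsmooth (Wmid ω) wt
      have h2 : Wmid ω - wt = r • Gasc ω := by rw [hWmid ω]; abel
      rw [h2, norm_smul] at h1
      have h3 : ‖m ω - a‖ ≤ β * (r * ‖Gasc ω‖) := by
        simpa [abs_of_pos hr] using h1
      nlinarith [norm_nonneg (m ω - a), norm_nonneg (Gasc ω), hr.le, hβ,
        mul_nonneg hβ (mul_nonneg hr.le (norm_nonneg (Gasc ω)))]
    calc ∫ ω, ‖m ω - a‖ ^ 2 ∂μ ≤ ∫ ω, β ^ 2 * r ^ 2 * ‖Gasc ω‖ ^ 2 ∂μ :=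
          integral_mono hgap_int (hGasc_sq_int.const_mul _) hpt
      _ = β ^ 2 * r ^ 2 * ∫ ω, ‖Gasc ω‖ ^ 2 ∂μ := integral_const_mul _ _
  -- nonnegativity of the second-moment integrals
  have hI2_nonneg : 0 ≤ ∫ ω, ‖m ω‖ ^ 2 ∂μ :=
    integral_nonneg fun ω => by positivity
  have hI3_nonneg : 0 ≤ ∫ ω, ‖m ω - a‖ ^ 2 ∂μ :=
    integral_nonneg fun ω => by positivity
  -- final assembly
  set A := ‖a‖ ^ 2 with hAdef
  set I1 := ∫ ω, ⟪a, m ω⟫ ∂μ with hI1def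
  set I2 := ∫ ω, ‖m ω‖ ^ 2 ∂μ with hI2def
  set I3 := ∫ ω, ‖m ω - a‖ ^ 2 ∂μ with hI3def
  set I4 := ∫ ω, ‖Gasc ω‖ ^ 2 ∂μ with hI4def
  rw [hcross] at hIL
  have hgoalN : η * β * (η + β * r ^ 2) * σ ^ 2 / b
      = (β * η ^ 2 + η * β ^ 2 * r ^ 2) * N := by
    rw [hNdef]; ring
  rw [hgoalN]
  exact sam_arith β r η κ N (∫ ω, L (wnext ω) ∂μ) (L wt) A I1 I2 I3 I4
    (∫ ω, ‖Gmid ω‖ ^ 2 ∂μ) hβ hη hr.le hκ0 hκ1 hβη hβr hN hA hI2_nonneg hIL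
    hGmid_sq hI3 hgap_le hGasc_sq
end

section
/- Let L : ℝ^d → ℝ be a differentiable β-smooth function bounded below. Run T iterations of layer-wise SAM with step size η, ascent radius r, and batch size b: at step t, draw a mini-batch stochastic gradient oracle ∇L_{t+1} (conditionally unbiased with per-point variance bounded by σ²/b at each evaluation point), set w_{t+1/2} = w_t + r∇L_{t+1}(w_t') where ∇L_{t+1}(w_t') is the stochastic gradient with coordinates outside the selected layers zeroed, and update w_{t+1} = w_t − η∇L_{t+1}(w_{t+1/2}). If 0 < η ≤ 1/(2β) and 0 < r ≤ 1/(2β), then (1/T)·Σ_{t=0}^{T−1} 𝔼[‖∇L(w_t)‖²] ≤ (4/(Tη))·(L(w_0) − 𝔼[L(w_T)]) + 4(ηβ + β²r²)·σ²/b, regardless of which and how many layers are selected to be perturbed at each step. -/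
open MeasureTheory
open scoped RealInnerProductSpace
open InnerProductSpace

/-- The orthogonal projection of `x ∈ ℝ^d` onto the coordinate subspace given by the
coordinates (layers) in `S`: the coordinates outside `S` are zeroed. -/
noncomputable def layerProj {d : ℕ} (S : Finset (Fin d)) (x : EuclideanSpace ℝ (Fin d)) :
    EuclideanSpace ℝ (Fin d) :=
  (EuclideanSpace.equiv (Fin d) ℝ).symm fun i => if i ∈ S then x i else 0

lemma layerProj_apply {d : ℕ} (S : Finset (Fin d)) (x : EuclideanSpace ℝ (Fin d)) (i : Fin d) :
    layerProj S x i = if i ∈ S then x i else 0 := rfl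

lemma layerProj_sub {d : ℕ} (S : Finset (Fin d)) (x y : EuclideanSpace ℝ (Fin d)) :
    layerProj S (x - y) = layerProj S x - layerProj S y := by
  ext i
  simp only [layerProj_apply, PiLp.sub_apply]
  split_ifs <;> simp

lemma norm_layerProj_le {d : ℕ} (S : Finset (Fin d)) (x : EuclideanSpace ℝ (Fin d)) :
    ‖layerProj S x‖ ≤ ‖x‖ := by
  rw [EuclideanSpace.norm_eq, EuclideanSpace.norm_eq]
  apply Real.sqrt_le_sqrt
  apply Finset.sum_le_sum
  intro i _
  rw [layerProj_apply]
  split_ifs <;> simp [sq_nonneg]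

lemma continuous_layerProj {d : ℕ} (S : Finset (Fin d)) :
    Continuous (layerProj S) := by
  refine (LipschitzWith.of_dist_le_mul (K := 1) fun x y => ?_).continuous
  rw [dist_eq_norm, dist_eq_norm, ← layerProj_sub, NNReal.coe_one, one_mul]
  exact norm_layerProj_le S _


section Helpers

variable {Ω : Type*} {m m0 : MeasurableSpace Ω} {μ : Measure Ω}

section IP
variable {E : Type*} [NormedAddCommGroup E] [InnerProductSpace ℝ E] [CompleteSpace E]

lemma sam_fderiv_eq_toDual_gradient (L : E → ℝ) (x : E) :
    fderiv ℝ L x = toDual ℝ E (gradient L x) := by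
  simp [gradient]

lemma sam_smooth_descent {L : E → ℝ} (hL : Differentiable ℝ L) {β : ℝ} (hβ0 : 0 ≤ β)
    (hsmooth : ∀ u v : E, ‖gradient L u - gradient L v‖ ≤ β * ‖u - v‖) (x y : E) :
    L y ≤ L x + ⟪gradient L x, y - x⟫ + β * ‖y - x‖ ^ 2 := by
  have key : ‖L y - L x - (toDual ℝ E (gradient L x)) (y - x)‖ ≤ (β * ‖y - x‖) * ‖y - x‖ := by
    refine Convex.norm_image_sub_le_of_norm_hasFDerivWithin_le'
      (f' := fun z => fderiv ℝ L z) (fun z _ => ((hL z).hasFDerivAt).hasFDerivWithinAt)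
      (fun z hz => ?_) (convex_segment x y) (left_mem_segment ℝ x y)
      (right_mem_segment ℝ x y)
    have h1 : fderiv ℝ L z - toDual ℝ E (gradient L x)
        = toDual ℝ E (gradient L z - gradient L x) := by
      rw [map_sub, sam_fderiv_eq_toDual_gradient L]
    rw [h1, LinearIsometryEquiv.norm_map]
    calc ‖gradient L z - gradient L x‖ ≤ β * ‖z - x‖ := hsmooth z x
      _ ≤ β * ‖y - x‖ := by
          gcongr
          obtain ⟨a, b, ha, hb, hab, rfl⟩ := hz
          have h2 : a • x + b • y - x = b • (y - x) := by
            have : a = 1 - b := by linarith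
            rw [this]; module
          rw [h2, norm_smul]
          calc ‖b‖ * ‖y - x‖ ≤ 1 * ‖y - x‖ := by
                gcongr; rw [Real.norm_eq_abs, abs_of_nonneg hb]; linarith
            _ = ‖y - x‖ := one_mul _
  have h2 : (toDual ℝ E (gradient L x)) (y - x) = ⟪gradient L x, y - x⟫ := by
    simp [toDual_apply_apply]
  rw [h2] at key
  have := (abs_le.mp (by rwa [Real.norm_eq_abs] at key)).2
  nlinarith [this]

lemma sam_inner_integrable_of_sq [IsFiniteMeasure μ] {U V : Ω → E}
    (hU : AEStronglyMeasurable U μ) (hV : AEStronglyMeasurable V μ)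
    (hU2 : Integrable (fun ω => ‖U ω‖ ^ 2) μ) (hV2 : Integrable (fun ω => ‖V ω‖ ^ 2) μ) :
    Integrable (fun ω => ⟪U ω, V ω⟫) μ := by
  refine Integrable.mono' ((hU2.add hV2).div_const 2) (hU.inner hV) ?_
  filter_upwards with ω
  rw [Real.norm_eq_abs]
  have h := abs_real_inner_le_norm (U ω) (V ω)
  simp only [Pi.add_apply]
  nlinarith [norm_nonneg (U ω), norm_nonneg (V ω), sq_nonneg (‖U ω‖ - ‖V ω‖)]

omit [InnerProductSpace ℝ E] [CompleteSpace E] in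
lemma sam_integrable_of_sq [IsFiniteMeasure μ] {U : Ω → E}
    (hU : AEStronglyMeasurable U μ) (hU2 : Integrable (fun ω => ‖U ω‖ ^ 2) μ) :
    Integrable U μ := by
  refine Integrable.mono' ((integrable_const (1 : ℝ)).add hU2) hU ?_
  filter_upwards with ω
  simp only [Pi.add_apply]
  nlinarith [norm_nonneg (U ω), sq_nonneg (‖U ω‖ - 1)]

end IP

lemma sam_condexp_bound_integral [IsProbabilityMeasure μ] (hm : m ≤ m0) {N : Ω → ℝ}
    {c : ℝ} (h : ∀ᵐ ω ∂μ, (μ[N | m]) ω ≤ c) :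
    ∫ ω, N ω ∂μ ≤ c := by
  haveI : SigmaFinite (μ.trim hm) := by
    have : IsFiniteMeasure (μ.trim hm) := isFiniteMeasure_trim hm
    infer_instance
  calc ∫ ω, N ω ∂μ = ∫ ω, (μ[N | m]) ω ∂μ := (integral_condExp hm).symm
    _ ≤ ∫ _ω, c ∂μ := integral_mono_ae integrable_condExp (integrable_const c) h
    _ = c := by simp

variable {F G : Type*} [NormedAddCommGroup F] [NormedSpace ℝ F] [CompleteSpace F]
  [NormedAddCommGroup G] [NormedSpace ℝ G] [CompleteSpace G]

lemma sam_condexp_clm_comm [IsProbabilityMeasure μ] (hm : m ≤ m0)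
    (T : F →L[ℝ] G) {Y : Ω → F} (hY : Integrable Y μ) :
    μ[fun ω => T (Y ω) | m] =ᵐ[μ] fun ω => T ((μ[Y | m]) ω) := by
  haveI : SigmaFinite (μ.trim hm) := by
    have : IsFiniteMeasure (μ.trim hm) := isFiniteMeasure_trim hm
    infer_instance
  refine (ae_eq_condExp_of_forall_setIntegral_eq hm (T.integrable_comp hY)
    (fun s hs hμs => (T.integrable_comp integrable_condExp).integrableOn)
    (fun s hs hμs => ?_) ?_).symm
  · rw [T.integral_comp_comm integrable_condExp.integrableOn,
      setIntegral_condExp hm hY hs, T.integral_comp_comm hY.integrableOn]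
  · exact (T.continuous.comp_stronglyMeasurable
      stronglyMeasurable_condExp).aestronglyMeasurable

lemma sam_abs_coord_le {d : ℕ} (x : EuclideanSpace ℝ (Fin d)) (i : Fin d) : |x i| ≤ ‖x‖ := by
  rw [EuclideanSpace.norm_eq, ← Real.sqrt_sq_eq_abs]
  apply Real.sqrt_le_sqrt
  refine le_trans ?_ (Finset.single_le_sum (f := fun j => ‖x j‖ ^ 2)
    (fun j _ => by positivity) (Finset.mem_univ i))
  simp [Real.norm_eq_abs, sq_abs]

lemma sam_coord_prod_integrable [IsFiniteMeasure μ] {d : ℕ}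
    {U V : Ω → EuclideanSpace ℝ (Fin d)}
    (hU : AEStronglyMeasurable U μ) (hV : AEStronglyMeasurable V μ)
    (hU2 : Integrable (fun ω => ‖U ω‖ ^ 2) μ) (hV2 : Integrable (fun ω => ‖V ω‖ ^ 2) μ)
    (i : Fin d) : Integrable (fun ω => U ω i * V ω i) μ := by
  refine Integrable.mono' ((hU2.add hV2).div_const 2) ?_ ?_
  · exact ((EuclideanSpace.proj (𝕜 := ℝ) i).continuous.comp_aestronglyMeasurable hU).mul
      ((EuclideanSpace.proj (𝕜 := ℝ) i).continuous.comp_aestronglyMeasurable hV)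
  · filter_upwards with ω
    have h1 := sam_abs_coord_le (U ω) i
    have h2 := sam_abs_coord_le (V ω) i
    rw [Real.norm_eq_abs, abs_mul]
    simp only [Pi.add_apply]
    nlinarith [sq_nonneg (|U ω i| - |V ω i|), mul_self_le_mul_self (abs_nonneg (U ω i)) h1,
      mul_self_le_mul_self (abs_nonneg (V ω i)) h2]

lemma sam_integral_inner_condexp_eq [IsProbabilityMeasure μ] (hm : m ≤ m0) {d : ℕ}
    {X Y Z : Ω → EuclideanSpace ℝ (Fin d)}
    (hX : StronglyMeasurable[m] X) (hXsq : Integrable (fun ω => ‖X ω‖ ^ 2) μ)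
    (hY : Integrable Y μ) (hYsq : Integrable (fun ω => ‖Y ω‖ ^ 2) μ)
    (hZm : AEStronglyMeasurable Z μ) (hZsq : Integrable (fun ω => ‖Z ω‖ ^ 2) μ)
    (hZ : μ[Y | m] =ᵐ[μ] Z) :
    ∫ ω, ⟪X ω, Y ω⟫ ∂μ = ∫ ω, ⟪X ω, Z ω⟫ ∂μ := by
  haveI : SigmaFinite (μ.trim hm) := by
    have : IsFiniteMeasure (μ.trim hm) := isFiniteMeasure_trim hm
    infer_instance
  have hXm : AEStronglyMeasurable X μ := (hX.mono hm).aestronglyMeasurable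
  have hYm : AEStronglyMeasurable Y μ := hY.aestronglyMeasurable
  have key : ∀ i : Fin d, ∫ ω, X ω i * Y ω i ∂μ = ∫ ω, X ω i * Z ω i ∂μ := by
    intro i
    have hYi : Integrable (fun ω => Y ω i) μ :=
      (EuclideanSpace.proj (𝕜 := ℝ) i).integrable_comp hY
    have hXi : StronglyMeasurable[m] (fun ω => X ω i) :=
      (EuclideanSpace.proj (𝕜 := ℝ) i).continuous.comp_stronglyMeasurable hX
    have hXYi : Integrable (fun ω => X ω i * Y ω i) μ :=
      sam_coord_prod_integrable hXm hYm hXsq hYsq i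
    have h1 : μ[(fun ω => Y ω i) | m] =ᵐ[μ] fun ω => Z ω i := by
      have h2 := sam_condexp_clm_comm hm (EuclideanSpace.proj (𝕜 := ℝ) i) hY
      refine h2.trans ?_
      filter_upwards [hZ] with ω hω
      simp only [hω]
      rfl
    have hcond : μ[(fun ω => X ω i * Y ω i) | m] =ᵐ[μ] fun ω => X ω i * Z ω i := by
      have := condExp_mul_of_stronglyMeasurable_left hXi
        (show Integrable ((fun ω => X ω i) * fun ω => Y ω i) μ from hXYi) hYi
      refine this.trans ?_
      filter_upwards [h1] with ω hω
      simp only [Pi.mul_apply, hω]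
    calc ∫ ω, X ω i * Y ω i ∂μ
        = ∫ ω, (μ[(fun ω => X ω i * Y ω i) | m]) ω ∂μ := (integral_condExp hm).symm
      _ = ∫ ω, X ω i * Z ω i ∂μ := integral_congr_ae hcond
  have hinner : ∀ (U V : Ω → EuclideanSpace ℝ (Fin d)) (ω : Ω),
      ⟪U ω, V ω⟫ = ∑ i : Fin d, U ω i * V ω i := by
    intro U V ω
    simp [PiLp.inner_apply, RCLike.inner_apply, conj_trivial, mul_comm]
  calc ∫ ω, ⟪X ω, Y ω⟫ ∂μ = ∫ ω, ∑ i : Fin d, X ω i * Y ω i ∂μ := by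
        simp_rw [hinner X Y]
    _ = ∑ i : Fin d, ∫ ω, X ω i * Y ω i ∂μ :=
        integral_finset_sum _ (fun i _ => sam_coord_prod_integrable hXm hYm hXsq hYsq i)
    _ = ∑ i : Fin d, ∫ ω, X ω i * Z ω i ∂μ := by simp_rw [key]
    _ = ∫ ω, ∑ i : Fin d, X ω i * Z ω i ∂μ :=
        (integral_finset_sum _ (fun i _ => sam_coord_prod_integrable hXm hZm hXsq hZsq i)).symm
    _ = ∫ ω, ⟪X ω, Z ω⟫ ∂μ := by simp_rw [hinner X Z]

end Helpers

set_option maxHeartbeats 2000000 in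
/-- Theorem 1: convergence guarantee of layer-wise SAM (Algorithm 1). Run `T` iterations
`w_{t+1/2} = w_t + r ∇L_{t+1}(w_t')`, `w_{t+1} = w_t − η ∇L_{t+1}(w_{t+1/2})`, where
`∇L_{t+1}(w_t')` is the stochastic gradient with the coordinates outside the selected
layers `S t` zeroed, and the mini-batch oracle is conditionally unbiased with per-point
variance `≤ σ²/b`. If `0 < η ≤ 1/(2β)` and `0 < r ≤ 1/(2β)`, then
`(1/T) Σ_{t<T} 𝔼‖∇L(w_t)‖² ≤ (4/(Tη))(L(w_0) − 𝔼[L(w_T)]) + 4(ηβ + β²r²)σ²/b`,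
regardless of which and how many layers are perturbed at each step. -/
theorem layerwise_sam_convergence
    {d : ℕ} {Ω : Type*} [MeasurableSpace Ω] (μ : Measure Ω) [IsProbabilityMeasure μ]
    (β r η σ : ℝ) (b : ℕ) (hb : 0 < b) (hβ : 0 ≤ β)
    (L : EuclideanSpace ℝ (Fin d) → ℝ) (hL : Differentiable ℝ L)
    (hsmooth : ∀ u v : EuclideanSpace ℝ (Fin d),
      ‖gradient L u - gradient L v‖ ≤ β * ‖u - v‖)
    (hbdd : ∃ C : ℝ, ∀ x, C ≤ L x)
    (hη : 0 < η) (hη2 : η ≤ 1 / (2 * β)) (hr : 0 < r) (hr2 : r ≤ 1 / (2 * β))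
    (T : ℕ) (hT : 0 < T)
    (w0 : EuclideanSpace ℝ (Fin d))
    (w Gasc Gmid : ℕ → Ω → EuclideanSpace ℝ (Fin d))
    (hw_meas : ∀ t, Measurable (w t))
    (hGasc_meas : ∀ t, Measurable (Gasc t)) (hGmid_meas : ∀ t, Measurable (Gmid t))
    (hw0 : ∀ ω, w 0 ω = w0)
    (hupdate : ∀ t < T, ∀ ω, w (t + 1) ω = w t ω - η • Gmid t ω)
    -- the ascent gradient has the coordinates outside the selected layers zeroed
    (S : ℕ → Finset (Fin d))
    (hGasc_supp : ∀ t < T, ∀ ω, ∀ i ∉ S t, Gasc t ω i = 0)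
    -- the oracle is conditionally unbiased with variance `≤ σ²/b` at the ascent point `w t`
    (hasc_mean : ∀ t < T,
      μ[Gasc t | MeasurableSpace.comap (w t) inferInstance] =ᵐ[μ]
        fun ω => layerProj (S t) (gradient L (w t ω)))
    (hasc_var : ∀ t < T, ∀ᵐ ω ∂μ,
      (μ[(fun ω => ‖Gasc t ω - layerProj (S t) (gradient L (w t ω))‖ ^ 2) |
          MeasurableSpace.comap (w t) inferInstance]) ω ≤ σ ^ 2 / b)
    -- the oracle is conditionally unbiased with variance `≤ σ²/b` at the perturbed point
    (hmid_mean : ∀ t < T,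
      μ[Gmid t | MeasurableSpace.comap (fun ω => (w t ω, Gasc t ω)) inferInstance] =ᵐ[μ]
        fun ω => gradient L (w t ω + r • Gasc t ω))
    (hmid_var : ∀ t < T, ∀ᵐ ω ∂μ,
      (μ[(fun ω => ‖Gmid t ω - gradient L (w t ω + r • Gasc t ω)‖ ^ 2) |
          MeasurableSpace.comap (fun ω => (w t ω, Gasc t ω)) inferInstance]) ω ≤ σ ^ 2 / b)
    -- integrability of the quantities appearing in the argument
    (hL_int : ∀ t ≤ T, Integrable (fun ω => L (w t ω)) μ)
    (hgrad_sq_int : ∀ t ≤ T, Integrable (fun ω => ‖gradient L (w t ω)‖ ^ 2) μ)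
    (hasc_int : ∀ t < T, Integrable (Gasc t) μ)
    (hasc_sq_int : ∀ t < T, Integrable (fun ω => ‖Gasc t ω‖ ^ 2) μ)
    (hmid_int : ∀ t < T, Integrable (Gmid t) μ)
    (hmid_sq_int : ∀ t < T, Integrable (fun ω => ‖Gmid t ω‖ ^ 2) μ)
    (hgradmid_sq_int : ∀ t < T,
      Integrable (fun ω => ‖gradient L (w t ω + r • Gasc t ω)‖ ^ 2) μ) :
    (1 / (T : ℝ)) * ∑ t ∈ Finset.range T, ∫ ω, ‖gradient L (w t ω)‖ ^ 2 ∂μ ≤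
      (4 / ((T : ℝ) * η)) * (L w0 - ∫ ω, L (w T ω) ∂μ) +
        4 * (η * β + β ^ 2 * r ^ 2) * σ ^ 2 / b := by
  have hβpos : 0 < β := by
    rcases hβ.lt_or_eq with h | h
    · exact h
    · exfalso; rw [← h] at hη2; norm_num at hη2; linarith
  have hβη : β * η ≤ 1 / 2 := by
    rw [le_div_iff₀ (by positivity : (0:ℝ) < 2 * β)] at hη2
    nlinarith
  have hβr : β * r ≤ 1 / 2 := by
    rw [le_div_iff₀ (by positivity : (0:ℝ) < 2 * β)] at hr2
    nlinarith
  have hbR : (0:ℝ) < (b : ℝ) := Nat.cast_pos.mpr hb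
  have hs2 : (0:ℝ) ≤ σ ^ 2 / b := by positivity
  have hgradcont : Continuous (gradient L) := by
    refine (LipschitzWith.of_dist_le_mul (K := β.toNNReal) fun x y => ?_).continuous
    rw [dist_eq_norm, dist_eq_norm, Real.coe_toNNReal β hβ]
    exact hsmooth x y
  have step : ∀ t, t < T →
      ∫ ω, L (w (t + 1) ω) ∂μ ≤ ∫ ω, L (w t ω) ∂μ
        - (η / 4) * ∫ ω, ‖gradient L (w t ω)‖ ^ 2 ∂μ
        + η * (β * η + β ^ 2 * r ^ 2) * (σ ^ 2 / b) := by
    intro t ht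
    have ht1 : t + 1 ≤ T := ht
    have htle : t ≤ T := ht.le
    -- measurability
    have hgt_m : Measurable fun ω => gradient L (w t ω) :=
      hgradcont.measurable.comp (hw_meas t)
    have hgt_a : AEStronglyMeasurable (fun ω => gradient L (w t ω)) μ :=
      hgt_m.aestronglyMeasurable
    have hpt_m : Measurable fun ω => layerProj (S t) (gradient L (w t ω)) :=
      (continuous_layerProj (S t)).measurable.comp hgt_m
    have hpt_a : AEStronglyMeasurable (fun ω => layerProj (S t) (gradient L (w t ω))) μ :=
      hpt_m.aestronglyMeasurable
    have hmidpt_m : Measurable fun ω => w t ω + r • Gasc t ω :=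
      (hw_meas t).add ((hGasc_meas t).const_smul r)
    have hgmid_m : Measurable fun ω => gradient L (w t ω + r • Gasc t ω) :=
      hgradcont.measurable.comp hmidpt_m
    have hgmid_a : AEStronglyMeasurable (fun ω => gradient L (w t ω + r • Gasc t ω)) μ :=
      hgmid_m.aestronglyMeasurable
    have hGmid_a : AEStronglyMeasurable (Gmid t) μ := (hGmid_meas t).aestronglyMeasurable
    have hGasc_a : AEStronglyMeasurable (Gasc t) μ := (hGasc_meas t).aestronglyMeasurable
    have hm1 := (hw_meas t).comap_le
    have hm2 := ((hw_meas t).prodMk (hGasc_meas t)).comap_le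
    have hpair_m2 : Measurable[MeasurableSpace.comap (fun ω => (w t ω, Gasc t ω)) inferInstance]
        (fun ω => (w t ω, Gasc t ω)) := measurable_iff_comap_le.mpr le_rfl
    have hw_m1 : Measurable[MeasurableSpace.comap (w t) inferInstance] (w t) :=
      measurable_iff_comap_le.mpr le_rfl
    have hgt_sm2 : StronglyMeasurable[MeasurableSpace.comap
        (fun ω => (w t ω, Gasc t ω)) inferInstance] (fun ω => gradient L (w t ω)) :=
      (hgradcont.measurable.comp (measurable_fst.comp hpair_m2)).stronglyMeasurable
    have hgmid_sm2 : StronglyMeasurable[MeasurableSpace.comap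
        (fun ω => (w t ω, Gasc t ω)) inferInstance]
        (fun ω => gradient L (w t ω + r • Gasc t ω)) :=
      (hgradcont.measurable.comp ((measurable_fst.comp hpair_m2).add
        ((measurable_snd.comp hpair_m2).const_smul r))).stronglyMeasurable
    have hpt_sm1 : StronglyMeasurable[MeasurableSpace.comap (w t) inferInstance]
        (fun ω => layerProj (S t) (gradient L (w t ω))) :=
      ((continuous_layerProj (S t)).measurable.comp
        (hgradcont.measurable.comp hw_m1)).stronglyMeasurable
    -- integrability
    have hgt_sq := hgrad_sq_int t htle
    have hgmid_sq := hgradmid_sq_int t ht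
    have hGasc_sq := hasc_sq_int t ht
    have hGmid_sq := hmid_sq_int t ht
    have hpt_sq : Integrable (fun ω => ‖layerProj (S t) (gradient L (w t ω))‖ ^ 2) μ := by
      refine hgt_sq.mono' ((hpt_m.norm.pow_const 2).aestronglyMeasurable) ?_
      filter_upwards with ω
      rw [Real.norm_eq_abs, abs_of_nonneg (by positivity)]
      exact pow_le_pow_left₀ (norm_nonneg _) (norm_layerProj_le _ _) 2
    have hNa_sq : Integrable
        (fun ω => ‖Gasc t ω - layerProj (S t) (gradient L (w t ω))‖ ^ 2) μ := by
      have hNa_eq : (fun ω => ‖Gasc t ω - layerProj (S t) (gradient L (w t ω))‖ ^ 2)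
          = fun ω => ‖Gasc t ω‖ ^ 2
            - 2 * ⟪Gasc t ω, layerProj (S t) (gradient L (w t ω))⟫
            + ‖layerProj (S t) (gradient L (w t ω))‖ ^ 2 :=
        funext fun ω => norm_sub_sq_real _ _
      rw [hNa_eq]
      exact (hGasc_sq.sub ((sam_inner_integrable_of_sq hGasc_a hpt_a hGasc_sq
        hpt_sq).const_mul 2)).add hpt_sq
    have hNm_sq : Integrable
        (fun ω => ‖Gmid t ω - gradient L (w t ω + r • Gasc t ω)‖ ^ 2) μ := by
      have hNm_eq : (fun ω => ‖Gmid t ω - gradient L (w t ω + r • Gasc t ω)‖ ^ 2)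
          = fun ω => ‖Gmid t ω‖ ^ 2
            - 2 * ⟪Gmid t ω, gradient L (w t ω + r • Gasc t ω)⟫
            + ‖gradient L (w t ω + r • Gasc t ω)‖ ^ 2 :=
        funext fun ω => norm_sub_sq_real _ _
      rw [hNm_eq]
      exact (hGmid_sq.sub ((sam_inner_integrable_of_sq hGmid_a hgmid_a hGmid_sq
        hgmid_sq).const_mul 2)).add hgmid_sq
    -- variance bounds
    have hvar_a : ∫ ω, ‖Gasc t ω - layerProj (S t) (gradient L (w t ω))‖ ^ 2 ∂μ ≤ σ ^ 2 / b :=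
      sam_condexp_bound_integral hm1 (hasc_var t ht)
    have hvar_m : ∫ ω, ‖Gmid t ω - gradient L (w t ω + r • Gasc t ω)‖ ^ 2 ∂μ ≤ σ ^ 2 / b :=
      sam_condexp_bound_integral hm2 (hmid_var t ht)
    -- cross terms via conditional unbiasedness
    have hcross_a : ∫ ω, ⟪layerProj (S t) (gradient L (w t ω)), Gasc t ω⟫ ∂μ
        = ∫ ω, ⟪layerProj (S t) (gradient L (w t ω)),
            layerProj (S t) (gradient L (w t ω))⟫ ∂μ :=
      sam_integral_inner_condexp_eq hm1 hpt_sm1 hpt_sq (hasc_int t ht) hGasc_sq hpt_a hpt_sq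
        (hasc_mean t ht)
    have hcross_m : ∫ ω, ⟪gradient L (w t ω + r • Gasc t ω), Gmid t ω⟫ ∂μ
        = ∫ ω, ⟪gradient L (w t ω + r • Gasc t ω),
            gradient L (w t ω + r • Gasc t ω)⟫ ∂μ :=
      sam_integral_inner_condexp_eq hm2 hgmid_sm2 hgmid_sq (hmid_int t ht) hGmid_sq hgmid_a
        hgmid_sq (hmid_mean t ht)
    have hBmain : ∫ ω, ⟪gradient L (w t ω), Gmid t ω⟫ ∂μ
        = ∫ ω, ⟪gradient L (w t ω), gradient L (w t ω + r • Gasc t ω)⟫ ∂μ :=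
      sam_integral_inner_condexp_eq hm2 hgt_sm2 hgt_sq (hmid_int t ht) hGmid_sq hgmid_a
        hgmid_sq (hmid_mean t ht)
    -- second moment bound for Gasc
    have hip_a : ∫ ω, ⟪layerProj (S t) (gradient L (w t ω)),
        layerProj (S t) (gradient L (w t ω))⟫ ∂μ
        = ∫ ω, ‖layerProj (S t) (gradient L (w t ω))‖ ^ 2 ∂μ := by
      simp_rw [real_inner_self_eq_norm_sq]
    have hip_m : ∫ ω, ⟪gradient L (w t ω + r • Gasc t ω),
        gradient L (w t ω + r • Gasc t ω)⟫ ∂μ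
        = ∫ ω, ‖gradient L (w t ω + r • Gasc t ω)‖ ^ 2 ∂μ := by
      simp_rw [real_inner_self_eq_norm_sq]
    have hia_int : Integrable
        (fun ω => ⟪layerProj (S t) (gradient L (w t ω)), Gasc t ω⟫) μ :=
      sam_inner_integrable_of_sq hpt_a hGasc_a hpt_sq hGasc_sq
    have him_int : Integrable
        (fun ω => ⟪gradient L (w t ω + r • Gasc t ω), Gmid t ω⟫) μ :=
      sam_inner_integrable_of_sq hgmid_a hGmid_a hgmid_sq hGmid_sq
    have hGasc_bound : ∫ ω, ‖Gasc t ω‖ ^ 2 ∂μ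
        ≤ σ ^ 2 / b + ∫ ω, ‖gradient L (w t ω)‖ ^ 2 ∂μ := by
      have h2int : Integrable (fun ω => 2 * ⟪layerProj (S t) (gradient L (w t ω)), Gasc t ω⟫
          - ‖layerProj (S t) (gradient L (w t ω))‖ ^ 2) μ := by
        exact (hia_int.const_mul 2).sub hpt_sq
      have e1 : ∫ ω, ‖Gasc t ω‖ ^ 2 ∂μ
          = ∫ ω, (‖Gasc t ω - layerProj (S t) (gradient L (w t ω))‖ ^ 2
            + (2 * ⟪layerProj (S t) (gradient L (w t ω)), Gasc t ω⟫
              - ‖layerProj (S t) (gradient L (w t ω))‖ ^ 2)) ∂μ := by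
        refine integral_congr_ae (Filter.Eventually.of_forall fun ω => ?_)
        have h := norm_sub_sq_real (Gasc t ω) (layerProj (S t) (gradient L (w t ω)))
        have hc := real_inner_comm (Gasc t ω) (layerProj (S t) (gradient L (w t ω)))
        linear_combination -h - 2 * hc
      have e2 : ∫ ω, (‖Gasc t ω - layerProj (S t) (gradient L (w t ω))‖ ^ 2
            + (2 * ⟪layerProj (S t) (gradient L (w t ω)), Gasc t ω⟫
              - ‖layerProj (S t) (gradient L (w t ω))‖ ^ 2)) ∂μ
          = ∫ ω, ‖Gasc t ω - layerProj (S t) (gradient L (w t ω))‖ ^ 2 ∂μ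
            + ∫ ω, (2 * ⟪layerProj (S t) (gradient L (w t ω)), Gasc t ω⟫
              - ‖layerProj (S t) (gradient L (w t ω))‖ ^ 2) ∂μ :=
        integral_add hNa_sq h2int
      have e3 : ∫ ω, (2 * ⟪layerProj (S t) (gradient L (w t ω)), Gasc t ω⟫
              - ‖layerProj (S t) (gradient L (w t ω))‖ ^ 2) ∂μ
          = ∫ ω, 2 * ⟪layerProj (S t) (gradient L (w t ω)), Gasc t ω⟫ ∂μ
            - ∫ ω, ‖layerProj (S t) (gradient L (w t ω))‖ ^ 2 ∂μ :=
        integral_sub (by exact hia_int.const_mul 2) hpt_sq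
      have e4 : ∫ ω, 2 * ⟪layerProj (S t) (gradient L (w t ω)), Gasc t ω⟫ ∂μ
          = 2 * ∫ ω, ⟪layerProj (S t) (gradient L (w t ω)), Gasc t ω⟫ ∂μ :=
        integral_const_mul 2 _
      have hptle : ∫ ω, ‖layerProj (S t) (gradient L (w t ω))‖ ^ 2 ∂μ
          ≤ ∫ ω, ‖gradient L (w t ω)‖ ^ 2 ∂μ :=
        integral_mono hpt_sq hgt_sq fun ω =>
          pow_le_pow_left₀ (norm_nonneg _) (norm_layerProj_le _ _) 2
      linarith [e1, e2, e3, e4, hcross_a, hip_a, hvar_a, hptle]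
    -- second moment bound for Gmid
    have hGmid_bound : ∫ ω, ‖Gmid t ω‖ ^ 2 ∂μ
        ≤ σ ^ 2 / b + ∫ ω, ‖gradient L (w t ω + r • Gasc t ω)‖ ^ 2 ∂μ := by
      have h2int : Integrable (fun ω => 2 * ⟪gradient L (w t ω + r • Gasc t ω), Gmid t ω⟫
          - ‖gradient L (w t ω + r • Gasc t ω)‖ ^ 2) μ := by
        exact (him_int.const_mul 2).sub hgmid_sq
      have e1 : ∫ ω, ‖Gmid t ω‖ ^ 2 ∂μ
          = ∫ ω, (‖Gmid t ω - gradient L (w t ω + r • Gasc t ω)‖ ^ 2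
            + (2 * ⟪gradient L (w t ω + r • Gasc t ω), Gmid t ω⟫
              - ‖gradient L (w t ω + r • Gasc t ω)‖ ^ 2)) ∂μ := by
        refine integral_congr_ae (Filter.Eventually.of_forall fun ω => ?_)
        have h := norm_sub_sq_real (Gmid t ω) (gradient L (w t ω + r • Gasc t ω))
        have hc := real_inner_comm (Gmid t ω) (gradient L (w t ω + r • Gasc t ω))
        linear_combination -h - 2 * hc
      have e2 : ∫ ω, (‖Gmid t ω - gradient L (w t ω + r • Gasc t ω)‖ ^ 2
            + (2 * ⟪gradient L (w t ω + r • Gasc t ω), Gmid t ω⟫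
              - ‖gradient L (w t ω + r • Gasc t ω)‖ ^ 2)) ∂μ
          = ∫ ω, ‖Gmid t ω - gradient L (w t ω + r • Gasc t ω)‖ ^ 2 ∂μ
            + ∫ ω, (2 * ⟪gradient L (w t ω + r • Gasc t ω), Gmid t ω⟫
              - ‖gradient L (w t ω + r • Gasc t ω)‖ ^ 2) ∂μ :=
        integral_add hNm_sq h2int
      have e3 : ∫ ω, (2 * ⟪gradient L (w t ω + r • Gasc t ω), Gmid t ω⟫
              - ‖gradient L (w t ω + r • Gasc t ω)‖ ^ 2) ∂μ
          = ∫ ω, 2 * ⟪gradient L (w t ω + r • Gasc t ω), Gmid t ω⟫ ∂μ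
            - ∫ ω, ‖gradient L (w t ω + r • Gasc t ω)‖ ^ 2 ∂μ :=
        integral_sub (by exact him_int.const_mul 2) hgmid_sq
      have e4 : ∫ ω, 2 * ⟪gradient L (w t ω + r • Gasc t ω), Gmid t ω⟫ ∂μ
          = 2 * ∫ ω, ⟪gradient L (w t ω + r • Gasc t ω), Gmid t ω⟫ ∂μ :=
        integral_const_mul 2 _
      linarith [e1, e2, e3, e4, hcross_m, hip_m, hvar_m]
    -- inner product lower bound
    have hIpt : ∀ ω, (1/2) * ‖gradient L (w t ω)‖ ^ 2
        + (1/2) * ‖gradient L (w t ω + r • Gasc t ω)‖ ^ 2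
        - (β ^ 2 * r ^ 2 / 2) * ‖Gasc t ω‖ ^ 2
        ≤ ⟪gradient L (w t ω), gradient L (w t ω + r • Gasc t ω)⟫ := by
      intro ω
      have hsd : ‖gradient L (w t ω + r • Gasc t ω) - gradient L (w t ω)‖ ^ 2
          ≤ β ^ 2 * r ^ 2 * ‖Gasc t ω‖ ^ 2 := by
        have h := hsmooth (w t ω + r • Gasc t ω) (w t ω)
        have h2 : w t ω + r • Gasc t ω - w t ω = r • Gasc t ω := add_sub_cancel_left _ _
        rw [h2, norm_smul, Real.norm_eq_abs, abs_of_pos hr] at h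
        nlinarith [norm_nonneg (gradient L (w t ω + r • Gasc t ω) - gradient L (w t ω)),
          norm_nonneg (Gasc t ω), mul_nonneg (mul_nonneg hβ hr.le) (norm_nonneg (Gasc t ω))]
      have h := norm_sub_sq_real (gradient L (w t ω + r • Gasc t ω)) (gradient L (w t ω))
      have hc := real_inner_comm (gradient L (w t ω + r • Gasc t ω)) (gradient L (w t ω))
      linarith
    have hinner_gg_int : Integrable
        (fun ω => ⟪gradient L (w t ω), gradient L (w t ω + r • Gasc t ω)⟫) μ :=
      sam_inner_integrable_of_sq hgt_a hgmid_a hgt_sq hgmid_sq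
    have hI : (1/2) * ∫ ω, ‖gradient L (w t ω)‖ ^ 2 ∂μ
        + (1/2) * ∫ ω, ‖gradient L (w t ω + r • Gasc t ω)‖ ^ 2 ∂μ
        - (β ^ 2 * r ^ 2 / 2) * ∫ ω, ‖Gasc t ω‖ ^ 2 ∂μ
        ≤ ∫ ω, ⟪gradient L (w t ω), gradient L (w t ω + r • Gasc t ω)⟫ ∂μ := by
      have hlhs_int : Integrable (fun ω => (1/2) * ‖gradient L (w t ω)‖ ^ 2
          + (1/2) * ‖gradient L (w t ω + r • Gasc t ω)‖ ^ 2
          - (β ^ 2 * r ^ 2 / 2) * ‖Gasc t ω‖ ^ 2) μ := by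
        exact ((hgt_sq.const_mul _).add (hgmid_sq.const_mul _)).sub (hGasc_sq.const_mul _)
      have h := integral_mono hlhs_int hinner_gg_int hIpt
      have e1 : ∫ ω, ((1/2) * ‖gradient L (w t ω)‖ ^ 2
            + (1/2) * ‖gradient L (w t ω + r • Gasc t ω)‖ ^ 2
            - (β ^ 2 * r ^ 2 / 2) * ‖Gasc t ω‖ ^ 2) ∂μ
          = ∫ ω, ((1/2) * ‖gradient L (w t ω)‖ ^ 2
            + (1/2) * ‖gradient L (w t ω + r • Gasc t ω)‖ ^ 2) ∂μ
            - ∫ ω, (β ^ 2 * r ^ 2 / 2) * ‖Gasc t ω‖ ^ 2 ∂μ :=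
        integral_sub (by exact (hgt_sq.const_mul _).add (hgmid_sq.const_mul _))
          (by exact hGasc_sq.const_mul _)
      have e2 : ∫ ω, ((1/2) * ‖gradient L (w t ω)‖ ^ 2
            + (1/2) * ‖gradient L (w t ω + r • Gasc t ω)‖ ^ 2) ∂μ
          = ∫ ω, (1/2) * ‖gradient L (w t ω)‖ ^ 2 ∂μ
            + ∫ ω, (1/2) * ‖gradient L (w t ω + r • Gasc t ω)‖ ^ 2 ∂μ :=
        integral_add (by exact hgt_sq.const_mul _) (by exact hgmid_sq.const_mul _)
      have e3 : ∫ ω, (1/2) * ‖gradient L (w t ω)‖ ^ 2 ∂μ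
          = (1/2) * ∫ ω, ‖gradient L (w t ω)‖ ^ 2 ∂μ := integral_const_mul _ _
      have e4 : ∫ ω, (1/2) * ‖gradient L (w t ω + r • Gasc t ω)‖ ^ 2 ∂μ
          = (1/2) * ∫ ω, ‖gradient L (w t ω + r • Gasc t ω)‖ ^ 2 ∂μ := integral_const_mul _ _
      have e5 : ∫ ω, (β ^ 2 * r ^ 2 / 2) * ‖Gasc t ω‖ ^ 2 ∂μ
          = (β ^ 2 * r ^ 2 / 2) * ∫ ω, ‖Gasc t ω‖ ^ 2 ∂μ := integral_const_mul _ _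
      linarith [h, e1, e2, e3, e4, e5]
    -- descent inequality
    have hinner_gtGmid_int : Integrable
        (fun ω => ⟪gradient L (w t ω), Gmid t ω⟫) μ :=
      sam_inner_integrable_of_sq hgt_a hGmid_a hgt_sq hGmid_sq
    have hdesc : ∫ ω, L (w (t + 1) ω) ∂μ ≤ ∫ ω, L (w t ω) ∂μ
        - η * ∫ ω, ⟪gradient L (w t ω), Gmid t ω⟫ ∂μ
        + β * η ^ 2 * ∫ ω, ‖Gmid t ω‖ ^ 2 ∂μ := by
      have hpt1 : ∀ ω, L (w (t + 1) ω) ≤ L (w t ω)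
          - η * ⟪gradient L (w t ω), Gmid t ω⟫ + β * η ^ 2 * ‖Gmid t ω‖ ^ 2 := by
        intro ω
        have hd := sam_smooth_descent hL hβ hsmooth (w t ω) (w (t + 1) ω)
        rw [hupdate t ht ω] at hd ⊢
        have h1 : w t ω - η • Gmid t ω - w t ω = -(η • Gmid t ω) := by abel
        rw [h1, inner_neg_right, real_inner_smul_right, norm_neg, norm_smul,
          Real.norm_eq_abs, abs_of_pos hη, mul_pow] at hd
        nlinarith [hd]
      have hRHS_int : Integrable (fun ω => L (w t ω)
          - η * ⟪gradient L (w t ω), Gmid t ω⟫ + β * η ^ 2 * ‖Gmid t ω‖ ^ 2) μ := by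
        exact ((hL_int t htle).sub (hinner_gtGmid_int.const_mul η)).add
          (hGmid_sq.const_mul (β * η ^ 2))
      have h := integral_mono (hL_int (t + 1) ht1) hRHS_int hpt1
      have e1 : ∫ ω, (L (w t ω) - η * ⟪gradient L (w t ω), Gmid t ω⟫
            + β * η ^ 2 * ‖Gmid t ω‖ ^ 2) ∂μ
          = ∫ ω, (L (w t ω) - η * ⟪gradient L (w t ω), Gmid t ω⟫) ∂μ
            + ∫ ω, β * η ^ 2 * ‖Gmid t ω‖ ^ 2 ∂μ :=
        integral_add (by exact (hL_int t htle).sub (hinner_gtGmid_int.const_mul η))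
          (by exact hGmid_sq.const_mul (β * η ^ 2))
      have e2 : ∫ ω, (L (w t ω) - η * ⟪gradient L (w t ω), Gmid t ω⟫) ∂μ
          = ∫ ω, L (w t ω) ∂μ - ∫ ω, η * ⟪gradient L (w t ω), Gmid t ω⟫ ∂μ :=
        integral_sub (hL_int t htle) (by exact hinner_gtGmid_int.const_mul η)
      have e3 : ∫ ω, η * ⟪gradient L (w t ω), Gmid t ω⟫ ∂μ
          = η * ∫ ω, ⟪gradient L (w t ω), Gmid t ω⟫ ∂μ := integral_const_mul _ _
      have e4 : ∫ ω, β * η ^ 2 * ‖Gmid t ω‖ ^ 2 ∂μ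
          = β * η ^ 2 * ∫ ω, ‖Gmid t ω‖ ^ 2 ∂μ := integral_const_mul _ _
      linarith [h, e1, e2, e3, e4]
    -- combine everything
    rw [hBmain] at hdesc
    have hGnn : 0 ≤ ∫ ω, ‖gradient L (w t ω)‖ ^ 2 ∂μ :=
      integral_nonneg fun ω => by positivity
    have hMnn : 0 ≤ ∫ ω, ‖gradient L (w t ω + r • Gasc t ω)‖ ^ 2 ∂μ :=
      integral_nonneg fun ω => by positivity
    have ha14 : β ^ 2 * r ^ 2 ≤ 1 / 4 := by nlinarith [mul_pos hβpos hr]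
    have hd1 : β * η ^ 2 * ∫ ω, ‖Gmid t ω‖ ^ 2 ∂μ
        ≤ β * η ^ 2 * (σ ^ 2 / b + ∫ ω, ‖gradient L (w t ω + r • Gasc t ω)‖ ^ 2 ∂μ) :=
      mul_le_mul_of_nonneg_left hGmid_bound (by positivity)
    have hd2 : (β ^ 2 * r ^ 2 / 2) * ∫ ω, ‖Gasc t ω‖ ^ 2 ∂μ
        ≤ (β ^ 2 * r ^ 2 / 2) * (σ ^ 2 / b + ∫ ω, ‖gradient L (w t ω)‖ ^ 2 ∂μ) :=
      mul_le_mul_of_nonneg_left hGasc_bound (by positivity)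
    have hd3 : η * ((1/2) * ∫ ω, ‖gradient L (w t ω)‖ ^ 2 ∂μ
        + (1/2) * ∫ ω, ‖gradient L (w t ω + r • Gasc t ω)‖ ^ 2 ∂μ
        - (β ^ 2 * r ^ 2 / 2) * ∫ ω, ‖Gasc t ω‖ ^ 2 ∂μ)
        ≤ η * ∫ ω, ⟪gradient L (w t ω), gradient L (w t ω + r • Gasc t ω)⟫ ∂μ :=
      mul_le_mul_of_nonneg_left hI hη.le
    have hk1 : 0 ≤ (1/4 - β ^ 2 * r ^ 2 / 2) * (η * ∫ ω, ‖gradient L (w t ω)‖ ^ 2 ∂μ) :=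
      mul_nonneg (by linarith) (mul_nonneg hη.le hGnn)
    have hk2 : 0 ≤ (1/2 - β * η)
        * (η * ∫ ω, ‖gradient L (w t ω + r • Gasc t ω)‖ ^ 2 ∂μ) :=
      mul_nonneg (by linarith) (mul_nonneg hη.le hMnn)
    have hk3 : 0 ≤ (β ^ 2 * r ^ 2 / 2) * (η * (σ ^ 2 / b)) := by positivity
    have hd2' : η * ((β ^ 2 * r ^ 2 / 2) * ∫ ω, ‖Gasc t ω‖ ^ 2 ∂μ)
        ≤ η * ((β ^ 2 * r ^ 2 / 2) * (σ ^ 2 / b + ∫ ω, ‖gradient L (w t ω)‖ ^ 2 ∂μ)) :=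
      mul_le_mul_of_nonneg_left hd2 hη.le
    nlinarith [hdesc, hd1, hd3, hd2']
  -- telescoping
  have tele : ∫ ω, L (w T ω) ∂μ - ∫ ω, L (w 0 ω) ∂μ
      = ∑ t ∈ Finset.range T, (∫ ω, L (w (t + 1) ω) ∂μ - ∫ ω, L (w t ω) ∂μ) :=
    (Finset.sum_range_sub (fun t => ∫ ω, L (w t ω) ∂μ) T).symm
  have hsum : ∑ t ∈ Finset.range T, (∫ ω, L (w (t + 1) ω) ∂μ - ∫ ω, L (w t ω) ∂μ)
      ≤ ∑ t ∈ Finset.range T, (-(η / 4) * ∫ ω, ‖gradient L (w t ω)‖ ^ 2 ∂μ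
        + η * (β * η + β ^ 2 * r ^ 2) * (σ ^ 2 / b)) := by
    refine Finset.sum_le_sum fun t ht => ?_
    have := step t (Finset.mem_range.mp ht)
    linarith
  rw [Finset.sum_add_distrib, Finset.sum_const, Finset.card_range, nsmul_eq_mul] at hsum
  have hmulsum : ∑ t ∈ Finset.range T, -(η / 4) * ∫ ω, ‖gradient L (w t ω)‖ ^ 2 ∂μ
      = -(η / 4) * ∑ t ∈ Finset.range T, ∫ ω, ‖gradient L (w t ω)‖ ^ 2 ∂μ := by
    rw [Finset.mul_sum]
  rw [hmulsum] at hsum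
  have hL0 : ∫ ω, L (w 0 ω) ∂μ = L w0 := by
    simp only [hw0, integral_const, measure_univ, ENNReal.toReal_one, probReal_univ, smul_eq_mul, one_mul]
  have hkey : (η / 4) * ∑ t ∈ Finset.range T, ∫ ω, ‖gradient L (w t ω)‖ ^ 2 ∂μ
      ≤ L w0 - ∫ ω, L (w T ω) ∂μ + (T : ℝ) * (η * (β * η + β ^ 2 * r ^ 2) * (σ ^ 2 / b)) := by
    rw [← hL0]
    linarith [tele, hsum]
  have hT' : (0:ℝ) < (T : ℝ) := Nat.cast_pos.mpr hT
  calc (1 / (T : ℝ)) * ∑ t ∈ Finset.range T, ∫ ω, ‖gradient L (w t ω)‖ ^ 2 ∂μ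
      = (4 / ((T : ℝ) * η)) * ((η / 4)
        * ∑ t ∈ Finset.range T, ∫ ω, ‖gradient L (w t ω)‖ ^ 2 ∂μ) := by
        field_simp
    _ ≤ (4 / ((T : ℝ) * η)) * (L w0 - ∫ ω, L (w T ω) ∂μ
        + (T : ℝ) * (η * (β * η + β ^ 2 * r ^ 2) * (σ ^ 2 / b))) :=
        mul_le_mul_of_nonneg_left hkey (by positivity)
    _ = (4 / ((T : ℝ) * η)) * (L w0 - ∫ ω, L (w T ω) ∂μ)
        + 4 * (η * β + β ^ 2 * r ^ 2) * σ ^ 2 / b := by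
        field_simp
end

section
/- Let L : ℝ^d → ℝ be a differentiable β-smooth function, let w_t ∈ ℝ^d be the current iterate, let w_{t+1/2} be a random point in ℝ^d (the perturbed iterate), and let G be a random vector in ℝ^d (the mini-batch stochastic gradient at w_{t+1/2}) satisfying the conditional unbiasedness and variance bounds 𝔼[G | w_{t+1/2}] = ∇L(w_{t+1/2}) and 𝔼[‖G − ∇L(w_{t+1/2})‖² | w_{t+1/2}] ≤ σ²/b. Let w_{t+1} = w_t − ηG with η > 0. Then 𝔼[L(w_{t+1})] ≤ 𝔼[L(w_t)] − η·𝔼[⟨∇L(w_{t+1/2}), ∇L(w_t)⟩] + η²β·σ²/b + η²β·𝔼[‖∇L(w_{t+1/2})‖²]. -/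
open MeasureTheory
open scoped RealInnerProductSpace

set_option maxHeartbeats 1000000

/-- The descent-step inequality from smoothness and Jensen's inequality (proof of Lemma 4):
for a differentiable `β`-smooth `L`, the current iterate `wt`, a random perturbed point
`Wmid`, and a random vector `G` with `𝔼[G | Wmid] = ∇L(Wmid)` and
`𝔼[‖G − ∇L(Wmid)‖² | Wmid] ≤ σ²/b`, the update `w_{t+1} = wt − ηG` with `η > 0` satisfies
`𝔼[L(w_{t+1})] ≤ 𝔼[L(wt)] − η𝔼⟨∇L(Wmid), ∇L(wt)⟩ + η²βσ²/b + η²β𝔼‖∇L(Wmid)‖²`. -/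
theorem sam_descent_step_inequality
    {d : ℕ} {Ω : Type*} [MeasurableSpace Ω] (μ : Measure Ω) [IsProbabilityMeasure μ]
    (β η σ : ℝ) (b : ℕ) (hb : 0 < b) (hβ : 0 ≤ β) (hη : 0 < η)
    (L : EuclideanSpace ℝ (Fin d) → ℝ) (hL : Differentiable ℝ L)
    (hsmooth : ∀ u v : EuclideanSpace ℝ (Fin d),
      ‖gradient L u - gradient L v‖ ≤ β * ‖u - v‖)
    (wt : EuclideanSpace ℝ (Fin d))
    (Wmid G : Ω → EuclideanSpace ℝ (Fin d))
    (hWmid_meas : Measurable Wmid) (hG_meas : Measurable G)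
    -- conditionally on `Wmid`, `G` is an unbiased estimate of `∇L(Wmid)`
    (hG_mean : μ[G | MeasurableSpace.comap Wmid inferInstance] =ᵐ[μ]
      fun ω => gradient L (Wmid ω))
    -- with conditional variance bounded by `σ²/b`
    (hG_var : ∀ᵐ ω ∂μ,
      (μ[(fun ω => ‖G ω - gradient L (Wmid ω)‖ ^ 2) |
          MeasurableSpace.comap Wmid inferInstance]) ω ≤ σ ^ 2 / b)
    -- integrability of the quantities appearing in the statement
    (hG_int : Integrable G μ)
    (hG_var_int : Integrable (fun ω => ‖G ω - gradient L (Wmid ω)‖ ^ 2) μ)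
    (hG_sq_int : Integrable (fun ω => ‖G ω‖ ^ 2) μ)
    (hL_int : Integrable (fun ω => L (wt - η • G ω)) μ)
    (hgradmid_sq_int : Integrable (fun ω => ‖gradient L (Wmid ω)‖ ^ 2) μ)
    (hinner_int : Integrable (fun ω => ⟪gradient L (Wmid ω), gradient L wt⟫) μ) :
    ∫ ω, L (wt - η • G ω) ∂μ ≤
      L wt - η * ∫ ω, ⟪gradient L (Wmid ω), gradient L wt⟫ ∂μ +
        η ^ 2 * β * σ ^ 2 / b + η ^ 2 * β * ∫ ω, ‖gradient L (Wmid ω)‖ ^ 2 ∂μ := by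
  have hm : MeasurableSpace.comap Wmid inferInstance ≤ ‹MeasurableSpace Ω› :=
    hWmid_meas.comap_le
  set m : MeasurableSpace Ω := MeasurableSpace.comap Wmid inferInstance with hm_def
  haveI : SigmaFinite (μ.trim hm) := by
    haveI : IsFiniteMeasure (μ.trim hm) := isFiniteMeasure_trim hm
    infer_instance
  set g : Ω → EuclideanSpace ℝ (Fin d) := fun ω => gradient L (Wmid ω) with hg_def
  -- integrability of g
  have hg_int : Integrable g μ := (integrable_condExp (m := m)).congr hG_mean
  -- pointwise descent
  have hpt : ∀ ω, L (wt - η • G ω) ≤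
      L wt - η * ⟪gradient L wt, G ω⟫ + β / 2 * (η ^ 2 * ‖G ω‖ ^ 2) := by
    intro ω
    have := descent_lemma β hβ L hL hsmooth wt (wt - η • G ω)
    have h1 : (wt - η • G ω) - wt = -(η • G ω) := by abel
    rw [h1] at this
    have h2 : ⟪gradient L wt, -(η • G ω)⟫ = -(η * ⟪gradient L wt, G ω⟫) := by
      rw [inner_neg_right, real_inner_smul_right]
    have h3 : ‖-(η • G ω)‖ ^ 2 = η ^ 2 * ‖G ω‖ ^ 2 := by
      rw [norm_neg, norm_smul, mul_pow, Real.norm_eq_abs, sq_abs]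
    rw [h2, h3] at this
    linarith
  -- integrable upper bound
  have hub_int : Integrable
      (fun ω => L wt - η * ⟪gradient L wt, G ω⟫ + β / 2 * (η ^ 2 * ‖G ω‖ ^ 2)) μ := by
    apply Integrable.add
    · exact (integrable_const _).sub ((hG_int.const_inner _).const_mul _)
    · exact (hG_sq_int.const_mul _).const_mul _
  have hstep1 : ∫ ω, L (wt - η • G ω) ∂μ ≤
      ∫ ω, (L wt - η * ⟪gradient L wt, G ω⟫ + β / 2 * (η ^ 2 * ‖G ω‖ ^ 2)) ∂μ :=
    integral_mono hL_int hub_int hpt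
  -- split the RHS integral
  have hinnerG_int : Integrable (fun ω => ⟪gradient L wt, G ω⟫) μ := hG_int.const_inner _
  have hsplit : ∫ ω, (L wt - η * ⟪gradient L wt, G ω⟫ + β / 2 * (η ^ 2 * ‖G ω‖ ^ 2)) ∂μ
      = L wt - η * ∫ ω, ⟪gradient L wt, G ω⟫ ∂μ
        + β / 2 * η ^ 2 * ∫ ω, ‖G ω‖ ^ 2 ∂μ := by
    have hi1 : Integrable (fun ω => -η * ⟪gradient L wt, G ω⟫) μ := hinnerG_int.const_mul _
    have hi2 : Integrable (fun ω => β / 2 * η ^ 2 * ‖G ω‖ ^ 2) μ := hG_sq_int.const_mul _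
    have e : ∀ ω, L wt - η * ⟪gradient L wt, G ω⟫ + β / 2 * (η ^ 2 * ‖G ω‖ ^ 2)
        = L wt + (-η * ⟪gradient L wt, G ω⟫ + β / 2 * η ^ 2 * ‖G ω‖ ^ 2) := fun ω => by ring
    have hi12 : Integrable
        (fun ω => -η * ⟪gradient L wt, G ω⟫ + β / 2 * η ^ 2 * ‖G ω‖ ^ 2) μ := hi1.add hi2
    rw [integral_congr_ae (Filter.Eventually.of_forall e),
      integral_add (integrable_const _) hi12,
      integral_add hi1 hi2, integral_const_mul _ _, integral_const_mul _ _, integral_const]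
    simp
    ring
  -- identify the inner product integral
  have hinner_eq : ∫ ω, ⟪gradient L wt, G ω⟫ ∂μ
      = ∫ ω, ⟪gradient L (Wmid ω), gradient L wt⟫ ∂μ := by
    have h1 : ∫ ω, ⟪gradient L wt, G ω⟫ ∂μ = ⟪gradient L wt, ∫ ω, G ω ∂μ⟫ :=
      integral_inner hG_int _
    have h2 : ∫ ω, G ω ∂μ = ∫ ω, g ω ∂μ := by
      rw [← integral_condExp (μ := μ) (f := G) hm]
      exact integral_congr_ae hG_mean
    have h3 : ⟪gradient L wt, ∫ ω, g ω ∂μ⟫ = ∫ ω, ⟪gradient L wt, g ω⟫ ∂μ :=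
      (integral_inner hg_int _).symm
    rw [h1, h2, h3]
    exact integral_congr_ae (Filter.Eventually.of_forall fun ω => real_inner_comm _ _)
  -- variance bound
  have hvar : ∫ ω, ‖G ω - gradient L (Wmid ω)‖ ^ 2 ∂μ ≤ σ ^ 2 / b := by
    rw [← integral_condExp (μ := μ) (f := fun ω => ‖G ω - gradient L (Wmid ω)‖ ^ 2) hm]
    calc ∫ ω, (μ[(fun ω => ‖G ω - gradient L (Wmid ω)‖ ^ 2) | m]) ω ∂μ
        ≤ ∫ _ω, σ ^ 2 / (b : ℝ) ∂μ :=
          integral_mono_ae integrable_condExp (integrable_const _) hG_var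
      _ = σ ^ 2 / b := by simp
  -- bound ∫‖G‖²
  have hGsq : ∫ ω, ‖G ω‖ ^ 2 ∂μ ≤
      2 * (σ ^ 2 / b) + 2 * ∫ ω, ‖gradient L (Wmid ω)‖ ^ 2 ∂μ := by
    have hpt2 : ∀ ω, ‖G ω‖ ^ 2 ≤
        2 * ‖G ω - gradient L (Wmid ω)‖ ^ 2 + 2 * ‖gradient L (Wmid ω)‖ ^ 2 := by
      intro ω
      have habel : G ω - gradient L (Wmid ω) + gradient L (Wmid ω) = G ω := by abel
      have h := norm_add_le (G ω - gradient L (Wmid ω)) (gradient L (Wmid ω))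
      rw [habel] at h
      nlinarith [norm_nonneg (G ω), sq_nonneg (‖G ω - gradient L (Wmid ω)‖ -
        ‖gradient L (Wmid ω)‖)]
    have hi3 : Integrable (fun ω => 2 * ‖G ω - gradient L (Wmid ω)‖ ^ 2) μ :=
      hG_var_int.const_mul 2
    have hi4 : Integrable (fun ω => 2 * ‖gradient L (Wmid ω)‖ ^ 2) μ :=
      hgradmid_sq_int.const_mul 2
    have hi34 : Integrable (fun ω => 2 * ‖G ω - gradient L (Wmid ω)‖ ^ 2
        + 2 * ‖gradient L (Wmid ω)‖ ^ 2) μ := hi3.add hi4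
    have hmono := integral_mono hG_sq_int hi34 hpt2
    rw [integral_add hi3 hi4, integral_const_mul _ _, integral_const_mul _ _] at hmono
    nlinarith [hvar]
  -- combine
  rw [hinner_eq] at hsplit
  have hβη : 0 ≤ β / 2 * η ^ 2 := by positivity
  have hfinal : β / 2 * η ^ 2 * ∫ ω, ‖G ω‖ ^ 2 ∂μ ≤
      η ^ 2 * β * σ ^ 2 / b + η ^ 2 * β * ∫ ω, ‖gradient L (Wmid ω)‖ ^ 2 ∂μ := by
    have := mul_le_mul_of_nonneg_left hGsq hβη
    calc β / 2 * η ^ 2 * ∫ ω, ‖G ω‖ ^ 2 ∂μ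
        ≤ β / 2 * η ^ 2 * (2 * (σ ^ 2 / b) + 2 * ∫ ω, ‖gradient L (Wmid ω)‖ ^ 2 ∂μ) := this
      _ = η ^ 2 * β * σ ^ 2 / b + η ^ 2 * β * ∫ ω, ‖gradient L (Wmid ω)‖ ^ 2 ∂μ := by ring
  linarith [hstep1, hsplit.le, hsplit.ge, hfinal]
end
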